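/- For all w₁, w₂ ∈ U_ad and all x, y ∈ ℝ^d, the modified nonlocal means kernels satisfy |γ_{w₁}(x,y) − γ_{w₂}(x,y)| ≤ 4 ‖f‖²_{L^∞} ‖w₁ − w₂‖_{L¹(B_ρ(0))}; in particular, if w_n → w in L²(B_ρ(0)) with w_n, w ∈ U_ad, then γ_{w_n} → γ_w uniformly on ℝ^d × ℝ^d. -/

import Mathlib

open MeasureTheory Filter

noncomputable section

/-- Points of `ℝ^d`, with the sup norm. -/
abbrev Rd (d : ℕ) : Type := Fin d → ℝ

/-- The interaction domain `Ω_I` of `Ω` with interaction radius `ε`. -/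
def interDom {d : ℕ} (Ω : Set (Rd d)) (ε : ℝ) : Set (Rd d) :=
  {y | y ∉ Ω ∧ ∃ x ∈ Ω, ‖y - x‖ ≤ ε}

/-- The admissible set of weights `U_ad = {w ∈ L²(B_ρ(0)) : 0 ≤ w ≤ W a.e.}`. -/
def Uad {d : ℕ} (ρ Wb : ℝ) : Set (Rd d → ℝ) :=
  {w | MemLp w 2 (volume.restrict (Metric.closedBall (0 : Rd d) ρ)) ∧
    ∀ᵐ τ ∂volume.restrict (Metric.closedBall (0 : Rd d) ρ), 0 ≤ w τ ∧ w τ ≤ Wb}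

/-- The modified nonlocal means kernel `γ_w`. -/
def kernelW {d : ℕ} (ρ ε : ℝ) (f w : Rd d → ℝ) (x y : Rd d) : ℝ :=
  if ‖x - y‖ ≤ ε then
    Real.exp (-∫ τ in Metric.closedBall (0 : Rd d) ρ, w τ * (f (x + τ) - f (y + τ)) ^ 2)
  else 0

/-- The linearized kernel `γ̃_h` at base weight `w` in direction `h`. -/
def kernelLin {d : ℕ} (ρ ε : ℝ) (f w h : Rd d → ℝ) (x y : Rd d) : ℝ :=
  if ‖x - y‖ ≤ ε then
    -kernelW ρ ε f w x y *
      ∫ τ in Metric.closedBall (0 : Rd d) ρ, h τ * (f (x + τ) - f (y + τ)) ^ 2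
  else 0

/-- The nonlocal bilinear form `(u,v)` over `A` with kernel `γ`. -/
def innerV {d : ℕ} (A : Set (Rd d)) (γ : Rd d → Rd d → ℝ) (u v : Rd d → ℝ) : ℝ :=
  ∫ x in A, ∫ y in A, (u x - u y) * (v x - v y) * γ x y

/-- The constrained space `V_c`: square integrable on `A = Ω̂`, vanishing a.e. on `I = Ω_I`. -/
def Vc {d : ℕ} (A I : Set (Rd d)) : Set (Rd d → ℝ) :=
  {v | MemLp v 2 (volume.restrict A) ∧ ∀ᵐ x ∂volume.restrict I, v x = 0}

/-- The `L²(s)` norm. -/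
def L2norm {d : ℕ} (s : Set (Rd d)) (v : Rd d → ℝ) : ℝ :=
  (eLpNorm v 2 (volume.restrict s)).toReal


lemma exp_lip {a b : ℝ} (ha : 0 ≤ a) (hb : 0 ≤ b) :
    |Real.exp (-a) - Real.exp (-b)| ≤ |a - b| := by
  wlog h : b ≤ a generalizing a b
  · rw [abs_sub_comm, abs_sub_comm a b]; exact this hb ha (le_of_not_ge h)
  have hkey : Real.exp (-b) * Real.exp (b - a) = Real.exp (-a) := by
    rw [← Real.exp_add]; ring_nf
  have h1 : (b - a) + 1 ≤ Real.exp (b - a) := Real.add_one_le_exp _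
  have h2 : Real.exp (-b) ≤ 1 := Real.exp_le_one_iff.mpr (by linarith)
  have h3 : Real.exp (-a) ≤ Real.exp (-b) := Real.exp_le_exp.mpr (by linarith)
  have h4 : (0:ℝ) < Real.exp (-b) := Real.exp_pos _
  rw [abs_of_nonpos (by linarith), abs_of_nonneg (by linarith)]
  nlinarith

section kernellip

variable {d : ℕ} {ρ ε Wb : ℝ} {f : Rd d → ℝ}

lemma ae_abs_le (hfL : MemLp f ⊤ (volume : Measure (Rd d))) :
    ∀ᵐ z ∂(volume : Measure (Rd d)),
      |f z| ≤ (eLpNorm f ⊤ (volume : Measure (Rd d))).toReal := by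
  have h₀ : eLpNorm f ⊤ (volume : Measure (Rd d)) ≠ ⊤ := hfL.2.ne
  filter_upwards [ae_le_eLpNormEssSup (f := f) (μ := (volume : Measure (Rd d)))] with z hz
  have h : (‖f z‖₊ : ENNReal) ≤ eLpNorm f ⊤ (volume : Measure (Rd d)) := by
    rwa [eLpNorm_exponent_top]
  have := ENNReal.toReal_mono h₀ h
  simpa [Real.norm_eq_abs] using this

lemma ae_abs_le_shift (hfL : MemLp f ⊤ (volume : Measure (Rd d))) (x : Rd d) :
    ∀ᵐ τ ∂(volume.restrict (Metric.closedBall (0 : Rd d) ρ)),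
      |f (x + τ)| ≤ (eLpNorm f ⊤ (volume : Measure (Rd d))).toReal := by
  have qmp := (measurePreserving_add_left (volume : Measure (Rd d)) x).quasiMeasurePreserving
  exact ae_restrict_of_ae (qmp.tendsto_ae.eventually (ae_abs_le hfL))

lemma aesm_shift (hfL : MemLp f ⊤ (volume : Measure (Rd d))) (x : Rd d) :
    AEStronglyMeasurable (fun τ => f (x + τ))
      (volume.restrict (Metric.closedBall (0 : Rd d) ρ)) := by
  have qmp := (measurePreserving_add_left (volume : Measure (Rd d)) x).quasiMeasurePreserving
  exact hfL.1.comp_quasiMeasurePreserving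
    (qmp.mono_left Measure.restrict_le_self.absolutelyContinuous)

lemma kernel_lip (hfL : MemLp f ⊤ (volume : Measure (Rd d)))
    {w₁ w₂ : Rd d → ℝ} (h1 : w₁ ∈ Uad (d := d) ρ Wb) (h2 : w₂ ∈ Uad (d := d) ρ Wb)
    (x y : Rd d) :
    |kernelW ρ ε f w₁ x y - kernelW ρ ε f w₂ x y| ≤
      4 * (eLpNorm f ⊤ (volume : Measure (Rd d))).toReal ^ 2 *
        ∫ τ in Metric.closedBall (0 : Rd d) ρ, |w₁ τ - w₂ τ| := by
  set B := Metric.closedBall (0 : Rd d) ρ with hB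
  set μ := volume.restrict B with hμ
  set M := (eLpNorm f ⊤ (volume : Measure (Rd d))).toReal with hM
  have hM0 : 0 ≤ M := ENNReal.toReal_nonneg
  haveI : IsFiniteMeasure μ := by
    constructor
    rw [hμ, Measure.restrict_apply_univ]
    exact (isCompact_closedBall _ _).measure_lt_top
  set g : Rd d → ℝ := fun τ => (f (x + τ) - f (y + τ)) ^ 2 with hg
  have gmeas : AEStronglyMeasurable g μ := by
    have h := (aesm_shift (ρ := ρ) hfL x).sub (aesm_shift (ρ := ρ) hfL y)
    have : g = fun τ => (f (x+τ) - f (y+τ)) * (f (x+τ) - f (y+τ)) := by ext τ; rw [hg]; ring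
    rw [this]; exact h.mul h
  have hgbd : ∀ᵐ τ ∂μ, 0 ≤ g τ ∧ g τ ≤ 4 * M ^ 2 := by
    filter_upwards [ae_abs_le_shift (ρ := ρ) hfL x, ae_abs_le_shift (ρ := ρ) hfL y] with τ hx hy
    rw [← hM] at hx hy
    have h1 := abs_le.mp hx
    have h2 := abs_le.mp hy
    constructor
    · positivity
    · show (f (x + τ) - f (y + τ)) ^ 2 ≤ 4 * M ^ 2
      nlinarith [h1.1, h1.2, h2.1, h2.2]
  have hint : ∀ w : Rd d → ℝ, w ∈ Uad (d := d) ρ Wb →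
      Integrable (fun τ => w τ * g τ) μ := by
    intro w hw
    refine Integrable.mono' (integrable_const (Wb * (4 * M ^ 2))) (hw.1.aestronglyMeasurable.mul gmeas) ?_
    filter_upwards [hw.2, hgbd] with τ hwτ hgτ
    rw [Real.norm_eq_abs, abs_of_nonneg (mul_nonneg hwτ.1 hgτ.1)]
    nlinarith [hwτ.1, hwτ.2, hgτ.1, hgτ.2]
  have hnn : ∀ w : Rd d → ℝ, w ∈ Uad (d := d) ρ Wb →
      0 ≤ ∫ τ, w τ * g τ ∂μ := by
    intro w hw
    refine integral_nonneg_of_ae ?_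
    filter_upwards [hw.2, hgbd] with τ hwτ hgτ
    exact mul_nonneg hwτ.1 hgτ.1
  have hintsub : Integrable (fun τ => w₁ τ - w₂ τ) μ :=
    (h1.1.sub h2.1).integrable (by norm_num)
  unfold kernelW
  split_ifs with h
  · have key := exp_lip (hnn w₁ h1) (hnn w₂ h2)
    refine le_trans key ?_
    have hsub : (∫ τ, w₁ τ * g τ ∂μ) - (∫ τ, w₂ τ * g τ ∂μ)
        = ∫ τ, (w₁ τ - w₂ τ) * g τ ∂μ := by
      rw [← integral_sub (hint w₁ h1) (hint w₂ h2)]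
      congr 1; ext τ; ring
    rw [hsub]
    have step1 : |∫ τ, (w₁ τ - w₂ τ) * g τ ∂μ| ≤ ∫ τ, ‖(w₁ τ - w₂ τ) * g τ‖ ∂μ := by
      simpa [Real.norm_eq_abs] using
        norm_integral_le_integral_norm (μ := μ) (f := fun τ => (w₁ τ - w₂ τ) * g τ)
    refine le_trans step1 ?_
    have hint2 : Integrable (fun τ => ‖(w₁ τ - w₂ τ) * g τ‖) μ := by
      have : Integrable (fun τ => (w₁ τ - w₂ τ) * g τ) μ := by
        have h' := (hint w₁ h1).sub (hint w₂ h2)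
        refine h'.congr (Eventually.of_forall fun τ => ?_)
        simp only [Pi.sub_apply]
        ring
      exact this.norm
    have hint3 : Integrable (fun τ => |w₁ τ - w₂ τ| * (4 * M ^ 2)) μ :=
      hintsub.norm.mul_const _
    have step2 : ∫ τ, ‖(w₁ τ - w₂ τ) * g τ‖ ∂μ ≤ ∫ τ, |w₁ τ - w₂ τ| * (4 * M ^ 2) ∂μ := by
      refine integral_mono_ae hint2 hint3 ?_
      filter_upwards [hgbd] with τ hgτ
      rw [Real.norm_eq_abs, abs_mul, abs_of_nonneg hgτ.1]
      exact mul_le_mul_of_nonneg_left hgτ.2 (abs_nonneg _)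
    refine le_trans step2 ?_
    rw [integral_mul_const]
    ring_nf
    exact le_refl _
  · rw [sub_self, abs_zero]
    exact mul_nonneg (by positivity) (integral_nonneg fun τ => abs_nonneg _)

end kernellip

/-- Lipschitz estimate of the kernel with respect to the weight, and the resulting
uniform convergence of kernels under `L²` convergence of weights. -/
theorem stmt12
    {d : ℕ} (hd : 1 ≤ d)
    (Ω : Set (Rd d)) (hΩm : MeasurableSet Ω) (hΩb : Bornology.IsBounded Ω)
    (ε : ℝ) (hε : 0 < ε)
    (ΩI : Set (Rd d)) (hΩI : ΩI = interDom Ω ε)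
    (Ohat : Set (Rd d)) (hOhat : Ohat = Ω ∪ ΩI)
    (ρ : ℝ) (hρ : 0 < ρ) (Wb : ℝ) (hWb : 0 < Wb)
    (f : Rd d → ℝ) (hfL : MemLp f ⊤ (volume : Measure (Rd d)))
    (hf0 : ∀ᵐ x : Rd d ∂volume, x ∉ Ohat → f x = 0)
 :
    (∀ w₁ ∈ Uad (d := d) ρ Wb, ∀ w₂ ∈ Uad (d := d) ρ Wb, ∀ x y : Rd d,
      |kernelW ρ ε f w₁ x y - kernelW ρ ε f w₂ x y| ≤
        4 * (eLpNorm f ⊤ (volume : Measure (Rd d))).toReal ^ 2 *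
          ∫ τ in Metric.closedBall (0 : Rd d) ρ, |w₁ τ - w₂ τ|) ∧
      ∀ (wn : ℕ → Rd d → ℝ) (w : Rd d → ℝ),
        (∀ n, wn n ∈ Uad (d := d) ρ Wb) → w ∈ Uad (d := d) ρ Wb →
        Tendsto (fun n => eLpNorm (fun τ => wn n τ - w τ) 2
          (volume.restrict (Metric.closedBall (0 : Rd d) ρ))) atTop (nhds 0) →
        TendstoUniformly (fun n (q : Rd d × Rd d) => kernelW ρ ε f (wn n) q.1 q.2)
          (fun q : Rd d × Rd d => kernelW ρ ε f w q.1 q.2) atTop := by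
  constructor
  · intro w₁ h1 w₂ h2 x y
    exact kernel_lip hfL h1 h2 x y
  · intro wn w hwn hw hL2
    set B := Metric.closedBall (0 : Rd d) ρ with hB
    set μ := volume.restrict B with hμ
    set M := (eLpNorm f ⊤ (volume : Measure (Rd d))).toReal with hM
    haveI : IsFiniteMeasure μ := by
      constructor
      rw [hμ, Measure.restrict_apply_univ]
      exact (isCompact_closedBall _ _).measure_lt_top
    have hμfin : μ Set.univ ≠ ⊤ := measure_ne_top μ _
    have hintn : ∀ n, Integrable (fun τ => wn n τ - w τ) μ := fun n =>
      (((hwn n).1.sub hw.1).integrable (by norm_num))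
    have heq : ∀ n, ∫ τ, |wn n τ - w τ| ∂μ
        = (eLpNorm (fun τ => wn n τ - w τ) 1 μ).toReal := by
      intro n
      rw [eLpNorm_one_eq_lintegral_enorm, ← ofReal_integral_norm_eq_lintegral_enorm (hintn n),
        ENNReal.toReal_ofReal (integral_nonneg fun τ => norm_nonneg _)]
      simp [Real.norm_eq_abs]
    set C : ENNReal := μ Set.univ ^ ((2:ℝ)⁻¹) with hC
    have hCne : C ≠ ⊤ := ENNReal.rpow_ne_top_of_nonneg (by norm_num) hμfin
    have hbound : ∀ n, eLpNorm (fun τ => wn n τ - w τ) 1 μ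
        ≤ eLpNorm (fun τ => wn n τ - w τ) 2 μ * C := by
      intro n
      have h := eLpNorm_le_eLpNorm_mul_rpow_measure_univ (p := 1) (q := 2)
        (by norm_num) (hintn n).1
      have hexp : (1 / (1:ENNReal).toReal - 1 / (2:ENNReal).toReal) = ((2:ℝ)⁻¹) := by norm_num
      rwa [hexp] at h
    have h10 : Tendsto (fun n => eLpNorm (fun τ => wn n τ - w τ) 1 μ) atTop (nhds 0) := by
      have hmul : Tendsto (fun n => eLpNorm (fun τ => wn n τ - w τ) 2 μ * C) atTop (nhds 0) := by
        have := ENNReal.Tendsto.mul_const hL2 (Or.inr hCne)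
        simpa using this
      exact tendsto_of_tendsto_of_tendsto_of_le_of_le tendsto_const_nhds hmul
        (fun n => zero_le) hbound
    have htoReal : Tendsto (fun n => (eLpNorm (fun τ => wn n τ - w τ) 1 μ).toReal)
        atTop (nhds 0) := by
      have := (ENNReal.tendsto_toReal (a := 0) (by simp)).comp h10
      simpa [Function.comp_def] using this
    have hc0 : Tendsto (fun n => 4 * M ^ 2 * ∫ τ, |wn n τ - w τ| ∂μ) atTop (nhds 0) := by
      have h' := htoReal.const_mul (4 * M ^ 2)
      simp only [mul_zero] at h'
      refine h'.congr fun n => ?_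
      rw [heq n]
    rw [Metric.tendstoUniformly_iff]
    intro δ hδ
    filter_upwards [hc0.eventually (gt_mem_nhds hδ)] with n hn q
    rw [Real.dist_eq]
    calc |kernelW ρ ε f w q.1 q.2 - kernelW ρ ε f (wn n) q.1 q.2|
        = |kernelW ρ ε f (wn n) q.1 q.2 - kernelW ρ ε f w q.1 q.2| := abs_sub_comm _ _
      _ ≤ 4 * M ^ 2 * ∫ τ, |wn n τ - w τ| ∂μ := kernel_lip hfL (hwn n) hw q.1 q.2
      _ < δ := hn
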